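/- arXiv:1607.01006 — 4 statements merged into one kernel-verified Lean document; each statement's English description precedes it below -/
import Mathlib

section
/- For every nonnegative integer n and complex x avoiding poles, ∑_{k=0}^{n} C(2n-k, n) · C(x+k, k) · H_k(x) = C(x+2n+1, n) · ( H_{2n+1}(x) - H_{n+1}(x) ), where H_j(x) = ∑_{i=1}^j 1/(x+i). -/
open Finset

noncomputable def Hx (x : ℝ) (n : ℕ) : ℝ := ∑ i ∈ Finset.range n, 1/(x+(i:ℝ)+1)
noncomputable def gch (y : ℝ) (s : ℕ) : ℝ := (∏ i ∈ Finset.range s, (y - (i:ℝ))) / (Nat.factorial s)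

lemma gch_zero (y : ℝ) : gch y 0 = 1 := by simp [gch]

lemma gch_pascal (y : ℝ) (s : ℕ) : gch y (s+1) = gch (y-1) (s+1) + gch (y-1) s := by
  have h1 : ∏ i ∈ range (s+1), (y - (i:ℝ)) = y * ∏ i ∈ range s, ((y-1) - (i:ℝ)) := by
    rw [Finset.prod_range_succ' (fun i => y - (i:ℝ))]
    simp only [Nat.cast_zero, sub_zero, Nat.cast_add, Nat.cast_one]
    rw [mul_comm]
    congr 1
    exact Finset.prod_congr rfl (by intros; ring)
  have h2 : ∏ i ∈ range (s+1), ((y-1) - (i:ℝ)) = (∏ i ∈ range s, ((y-1) - (i:ℝ))) * (y-1-s) := by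
    rw [Finset.prod_range_succ]
  have hf : (Nat.factorial (s+1) : ℝ) = (s+1) * Nat.factorial s := by
    push_cast [Nat.factorial_succ]; ring
  have hfs : (Nat.factorial s : ℝ) ≠ 0 := Nat.cast_ne_zero.2 (Nat.factorial_ne_zero s)
  have hfs1 : (s+1 : ℝ) ≠ 0 := by positivity
  simp only [gch, h1, h2, hf]
  field_simp
  ring

lemma key (p : ℕ) : ∀ q : ℕ, ∀ x : ℝ,
    ∑ k ∈ range (q+1), (((p+q-k).choose p : ℕ) : ℝ) * gch (x+(k:ℝ)) k
      = gch (x+(p:ℝ)+(q:ℝ)+1) q := by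
  induction p with
  | zero =>
    intro q
    induction q with
    | zero => intro x; simp [gch_zero]
    | succ q ihq =>
      intro x
      rw [Finset.sum_range_succ]
      have h1 : ∀ k ∈ range (q+1), (((0+(q+1)-k).choose 0 : ℕ) : ℝ) * gch (x+(k:ℝ)) k
          = (((0+q-k).choose 0 : ℕ) : ℝ) * gch (x+(k:ℝ)) k := by
        intro k hk; simp
      rw [Finset.sum_congr rfl h1, ihq x]
      have hp := gch_pascal (x+(q:ℝ)+2) q
      have e1 : x+(q:ℝ)+2-1 = x+(q:ℝ)+1 := by ring
      rw [e1] at hp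
      have e2 : x + ((q:ℕ)+1 : ℕ) + 1 = x + (q:ℝ) + 2 := by push_cast; ring
      have e3 : x + (((q:ℕ)+1 : ℕ):ℝ) = x + (q:ℝ) + 1 := by push_cast; ring
      push_cast
      simp only [Nat.choose_zero_right, Nat.cast_one, one_mul]
      rw [show x + ((q:ℝ)+1) = x+(q:ℝ)+1 by ring, show x + 0 + ((q:ℝ)+1) + 1 = x+(q:ℝ)+2 by ring, hp]
      ring
  | succ p ihp =>
    intro q
    induction q with
    | zero =>
      intro x
      simp [gch_zero, Nat.choose_self]
    | succ q ihq =>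
      intro x
      have split : ∀ k ∈ range (q+2), (((p+1+(q+1)-k).choose (p+1) : ℕ) : ℝ) * gch (x+(k:ℝ)) k
          = (((p+q+1-k).choose (p+1) : ℕ) : ℝ) * gch (x+(k:ℝ)) k
            + (((p+q+1-k).choose p : ℕ) : ℝ) * gch (x+(k:ℝ)) k := by
        intro k hk
        rw [Finset.mem_range] at hk
        have e : p+1+(q+1)-k = (p+q+1-k)+1 := by omega
        rw [e, Nat.choose_succ_succ]
        push_cast; ring
      rw [Finset.sum_congr rfl split, Finset.sum_add_distrib]
      -- second sum is ihp at q+1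
      have h2 : ∑ k ∈ range (q+2), (((p+q+1-k).choose p : ℕ) : ℝ) * gch (x+(k:ℝ)) k
          = gch (x+(p:ℝ)+((q:ℝ)+1)+1) (q+1) := by
        have := ihp (q+1) x
        push_cast at this ⊢
        convert this using 2
        simp only [Nat.add_assoc]
      -- first sum: last term vanishes, rest is ihq
      have h1 : ∑ k ∈ range (q+2), (((p+q+1-k).choose (p+1) : ℕ) : ℝ) * gch (x+(k:ℝ)) k
          = gch (x+((p:ℝ)+1)+(q:ℝ)+1) q := by
        rw [Finset.sum_range_succ]
        have e0 : p+q+1-(q+1) = p := by omega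
        rw [e0, Nat.choose_succ_self, Nat.cast_zero, zero_mul, add_zero]
        have hc : ∀ k ∈ range (q+1), (((p+q+1-k).choose (p+1) : ℕ) : ℝ) * gch (x+(k:ℝ)) k
            = (((p+1+q-k).choose (p+1) : ℕ) : ℝ) * gch (x+(k:ℝ)) k := by
          intro k hk
          congr 3
          omega
        rw [Finset.sum_congr rfl hc, ihq x]
        push_cast
        ring_nf
      rw [h1, h2]
      have hp2 := gch_pascal (x+(p:ℝ)+(q:ℝ)+3) q
      have e1 : x+(p:ℝ)+(q:ℝ)+3-1 = x+(p:ℝ)+(q:ℝ)+2 := by ring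
      rw [e1] at hp2
      push_cast
      rw [show x + ((p:ℝ)+1) + (q:ℝ) + 1 = x+(p:ℝ)+(q:ℝ)+2 by ring,
          show x + (p:ℝ) + ((q:ℝ)+1) + 1 = x+(p:ℝ)+(q:ℝ)+2 by ring,
          show x + ((p:ℝ)+1) + ((q:ℝ)+1) + 1 = x+(p:ℝ)+(q:ℝ)+3 by ring, hp2]
      ring

lemma prodP_deriv (x : ℝ) (hx : ∀ i : ℕ, 1 ≤ i → x + (i:ℝ) ≠ 0) (m k : ℕ) :
    HasDerivAt (fun y : ℝ => ∏ i ∈ range k, (y + ((m+i : ℕ):ℝ) + 1))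
      ((∏ i ∈ range k, (x + ((m+i:ℕ):ℝ) + 1)) * ∑ i ∈ range k, 1/(x + ((m+i:ℕ):ℝ) + 1)) x := by
  induction k with
  | zero => simpa using hasDerivAt_const x (1:ℝ)
  | succ k ih =>
    have hg : HasDerivAt (fun y : ℝ => y + ((m+k:ℕ):ℝ) + 1) 1 x := by
      have e : (fun y : ℝ => y + ((m+k:ℕ):ℝ) + 1) = fun y : ℝ => y + (((m+k:ℕ):ℝ)+1) := by
        funext y; ring
      rw [e]; exact (hasDerivAt_id x).add_const _
    have h := ih.mul hg
    have hne : x + ((m+k:ℕ):ℝ) + 1 ≠ 0 := by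
      have := hx (m+k+1) (by omega)
      push_cast at this ⊢
      intro hcon; apply this; linarith
    have heq : (fun y : ℝ => (∏ i ∈ range k, (y + ((m+i:ℕ):ℝ) + 1)) * (y + ((m+k:ℕ):ℝ) + 1))
        = fun y : ℝ => ∏ i ∈ range (k+1), (y + ((m+i:ℕ):ℝ) + 1) := by
      funext y; rw [Finset.prod_range_succ]
    simp only [Pi.mul_def] at h
    rw [heq] at h
    refine h.congr_deriv (Eq.symm ?_)
    rw [Finset.prod_range_succ, Finset.sum_range_succ]
    set A := ∏ i ∈ range k, (x + ((m+i:ℕ):ℝ) + 1) with hA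
    set S := ∑ i ∈ range k, 1/(x + ((m+i:ℕ):ℝ) + 1) with hS
    set c := x + ((m+k:ℕ):ℝ) + 1 with hc0
    have hc : c * (1/c) = 1 := mul_one_div_cancel hne
    calc A*c*(S + 1/c) = A*S*c + A*(c*(1/c)) := by ring
      _ = A*S*c + A*1 := by rw [hc]

lemma prod_reflect (x : ℝ) (m k : ℕ) :
    ∏ i ∈ range k, ((x + ((m+k:ℕ):ℝ)) - (i:ℝ)) = ∏ i ∈ range k, (x + ((m+i:ℕ):ℝ) + 1) := by
  have h : ∀ j ∈ range k, (x + ((m+k:ℕ):ℝ)) - (j:ℝ) = x + ((m + (k-1-j) : ℕ):ℝ) + 1 := by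
    intro j hj
    rw [Finset.mem_range] at hj
    have h1 : m + (k-1-j) = m + k - (1+j) := by omega
    rw [h1, Nat.cast_sub (by omega)]
    push_cast
    ring
  rw [Finset.prod_congr rfl h]
  exact Finset.prod_range_reflect (fun j => x + ((m+j:ℕ):ℝ) + 1) k

lemma gch_hasDeriv (x : ℝ) (hx : ∀ i : ℕ, 1 ≤ i → x + (i:ℝ) ≠ 0) (m k : ℕ) :
    HasDerivAt (fun y : ℝ => gch (y + ((m+k:ℕ):ℝ)) k)
      (gch (x + ((m+k:ℕ):ℝ)) k * ∑ i ∈ range k, 1/(x + ((m+i:ℕ):ℝ) + 1)) x := by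
  have h := (prodP_deriv x hx m k).div_const (Nat.factorial k : ℝ)
  have hfun : (fun y : ℝ => (∏ i ∈ range k, (y + ((m+i:ℕ):ℝ) + 1)) / (Nat.factorial k : ℝ))
      = fun y : ℝ => gch (y + ((m+k:ℕ):ℝ)) k := by
    funext y
    rw [gch, ← prod_reflect y m k]
  rw [hfun] at h
  refine h.congr_deriv ?_
  rw [gch, ← prod_reflect x m k]
  ring

lemma gch_hasDeriv0 (x : ℝ) (hx : ∀ i : ℕ, 1 ≤ i → x + (i:ℝ) ≠ 0) (k : ℕ) :
    HasDerivAt (fun y : ℝ => gch (y + (k:ℝ)) k) (gch (x + (k:ℝ)) k * Hx x k) x := by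
  have h := gch_hasDeriv x hx 0 k
  simp only [Nat.zero_add] at h
  convert h using 2
  rfl

lemma gch_hasDerivR (x : ℝ) (hx : ∀ i : ℕ, 1 ≤ i → x + (i:ℝ) ≠ 0) (n : ℕ) :
    HasDerivAt (fun y : ℝ => gch (y + 2*(n:ℝ)+1) n)
      (gch (x + 2*(n:ℝ)+1) n * (Hx x (2*n+1) - Hx x (n+1))) x := by
  have h := gch_hasDeriv x hx (n+1) n
  have e : ((n+1+n : ℕ):ℝ) = 2*(n:ℝ)+1 := by push_cast; ring
  have hdiff : Hx x (2*n+1) - Hx x (n+1) = ∑ i ∈ range n, 1/(x + ((n+1+i:ℕ):ℝ) + 1) := by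
    have h2 : Hx x (2*n+1) = Hx x (n+1) + ∑ i ∈ range n, 1/(x + ((n+1+i:ℕ):ℝ) + 1) := by
      rw [Hx, show 2*n+1 = (n+1)+n by omega, Finset.sum_range_add]
      rfl
    rw [h2]; ring
  rw [hdiff]
  rw [e] at h
  have e3 : ∀ y : ℝ, y + (2*(n:ℝ)+1) = y + 2*(n:ℝ)+1 := fun y => (add_assoc y _ 1).symm
  simp only [e3] at h
  exact h

theorem stmt14 (x : ℝ) (hx : ∀ i : ℕ, 1 ≤ i → x + (i:ℝ) ≠ 0) (n : ℕ) :
    ∑ k ∈ Finset.range (n+1), (((2*n-k).choose n : ℕ) : ℝ) * gch (x+(k:ℝ)) k * Hx x k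
      = gch (x+2*(n:ℝ)+1) n * (Hx x (2*n+1) - Hx x (n+1)) := by
  have hL : HasDerivAt (fun y : ℝ => ∑ k ∈ range (n+1), (((2*n-k).choose n : ℕ):ℝ) * gch (y+(k:ℝ)) k)
      (∑ k ∈ range (n+1), (((2*n-k).choose n : ℕ):ℝ) * (gch (x+(k:ℝ)) k * Hx x k)) x :=
    HasDerivAt.fun_sum (fun k _ => (gch_hasDeriv0 x hx k).const_mul _)
  have hfun : (fun y : ℝ => ∑ k ∈ range (n+1), (((2*n-k).choose n:ℕ):ℝ) * gch (y+(k:ℝ)) k)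
      = fun y : ℝ => gch (y+2*(n:ℝ)+1) n := by
    funext y
    have h := key n n y
    have hc : ∀ k ∈ range (n+1), (((2*n-k).choose n:ℕ):ℝ) * gch (y+(k:ℝ)) k
        = (((n+n-k).choose n:ℕ):ℝ) * gch (y+(k:ℝ)) k := by
      intro k _
      congr 3
      omega
    rw [Finset.sum_congr rfl hc, h]
    congr 1
    ring
  rw [hfun] at hL
  have hu := hL.unique (gch_hasDerivR x hx n)
  calc ∑ k ∈ Finset.range (n+1), (((2*n-k).choose n : ℕ) : ℝ) * gch (x+(k:ℝ)) k * Hx x k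
      = ∑ k ∈ range (n+1), (((2*n-k).choose n : ℕ):ℝ) * (gch (x+(k:ℝ)) k * Hx x k) :=
        Finset.sum_congr rfl (fun k _ => by ring)
    _ = gch (x+2*(n:ℝ)+1) n * (Hx x (2*n+1) - Hx x (n+1)) := hu
end

section
/- For every nonnegative integer n and complex x avoiding poles, ∑_{k=0}^{n} C(2n-k, n) · C(x+k, k) · k · H_k(x) = (x+1) · C(x+2n+1, n-1) · ( H_{2n+1}(x) - H_{n+1}(x+1) ), where H_j(x) = ∑_{i=1}^j 1/(x+i). -/
open Finset

noncomputable def gchZ (y : ℝ) (s : ℤ) : ℝ :=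
  if s < 0 then 0 else gch y s.toNat


lemma gch_succ (y : ℝ) (s : ℕ) : gch y (s+1) = gch y s * (y - s) / (s+1) := by
  simp only [gch, prod_range_succ, Nat.factorial_succ, Nat.cast_mul]
  have h1 : (Nat.factorial s : ℝ) ≠ 0 := by positivity
  have h2 : ((s:ℝ)+1) ≠ 0 := by positivity
  field_simp
  push_cast
  try ring
  try (left; trivial)

lemma gch_succ_top (y : ℝ) (s : ℕ) : gch y (s+1) = gch (y-1) s * y / (s+1) := by
  simp only [gch, Nat.factorial_succ, Nat.cast_mul]
  rw [prod_range_succ']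
  have h1 : (Nat.factorial s : ℝ) ≠ 0 := by positivity
  have h2 : ((s:ℝ)+1) ≠ 0 := by positivity
  have : ∀ i : ℕ, y - ((i:ℝ)+1) = (y-1) - i := by intro i; ring
  simp only [Nat.cast_add, Nat.cast_one]
  rw [Finset.prod_congr rfl (fun i _ => by push_cast; ring_nf : ∀ i ∈ Finset.range s, y - ((i:ℝ)+1) = (y-1) - i)]
  field_simp
  try ring
  try (left; trivial)

lemma hockey : ∀ (m : ℕ) (y : ℝ), ∑ j ∈ range (m+1), gch (y+j) j = gch (y+m+1) m := by
  intro m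
  induction m with
  | zero => intro y; simp [gch_zero]
  | succ m ih =>
    intro y
    rw [sum_range_succ, ih]
    have h := gch_pascal (y+(m:ℝ)+2) m
    rw [show y+(m:ℝ)+2-1 = y+(m:ℝ)+1 from by ring] at h
    have c : ((m+1:ℕ):ℝ) = (m:ℝ)+1 := by push_cast; ring
    rw [c, show y+((m:ℝ)+1) = y+(m:ℝ)+1 from by ring,
        show y+(m:ℝ)+1+1 = y+(m:ℝ)+2 from by ring, h]
    ring

lemma vand : ∀ (z m : ℕ) (y : ℝ),
    ∑ j ∈ range (m+1), gch (y+j) j * ((z+m-j).choose (m-j) : ℝ) = gch (y+z+m+1) m := by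
  intro z
  induction z with
  | zero =>
    intro m y
    have : ∀ j ∈ range (m+1), gch (y+j) j * ((0+m-j).choose (m-j) : ℝ) = gch (y+j) j := by
      intro j hj
      rw [Nat.zero_add, Nat.choose_self, Nat.cast_one, mul_one]
    rw [sum_congr rfl this, hockey]
    norm_num
  | succ z hz =>
    intro m
    induction m with
    | zero =>
      intro y
      simp [gch_zero]
    | succ m hm =>
      intro y
      have split : ∀ j ∈ range (m+1),
          gch (y+j) j * (((z+1)+(m+1)-j).choose ((m+1)-j) : ℝ)
          = gch (y+j) j * ((z+(m+1)-j).choose ((m+1)-j) : ℝ)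
            + gch (y+j) j * (((z+1)+m-j).choose (m-j) : ℝ) := by
        intro j hj
        rw [mem_range] at hj
        have h1 : (z+1)+(m+1)-j = (z+(m+1)-j) + 1 := by omega
        have h2 : (m+1)-j = (m-j) + 1 := by omega
        have h3 : z+(m+1)-j = (z+1)+m-j := by omega
        rw [h1, h2, Nat.choose_succ_succ, ← h2, ← h3]
        have h5 : (m-j).succ = (m+1)-j := by omega
        rw [h5]
        push_cast
        ring
      rw [sum_range_succ, sum_congr rfl split, sum_add_distrib, hm y]
      have hz' := hz (m+1) y
      rw [sum_range_succ] at hz'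
      simp only [Nat.add_sub_cancel, Nat.sub_self, Nat.choose_zero_right, Nat.cast_one,
        mul_one] at hz' ⊢
      push_cast at hz' ⊢
      have h4 : gch (y+(z:ℝ)+(m:ℝ)+3) (m+1)
          = gch (y+(z:ℝ)+(m:ℝ)+2) (m+1) + gch (y+(z:ℝ)+(m:ℝ)+2) m := by
        have h := gch_pascal (y+(z:ℝ)+(m:ℝ)+3) m
        rw [show y+(z:ℝ)+(m:ℝ)+3-1 = y+(z:ℝ)+(m:ℝ)+2 from by ring] at h
        exact h
      rw [show y + ((z:ℝ)+1) + ((m:ℝ)+1) + 1 = y+(z:ℝ)+(m:ℝ)+3 from by ring,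
          show y + ((z:ℝ)+1) + (m:ℝ) + 1 = y+(z:ℝ)+(m:ℝ)+2 from by ring, h4]
      rw [show y + (z:ℝ) + ((m:ℝ)+1) + 1 = y+(z:ℝ)+(m:ℝ)+2 from by ring] at hz'
      linarith [hz']

lemma keyId (m : ℕ) (x : ℝ) :
    ∑ k ∈ range (m+2), ((2*(m+1)-k).choose (m+1) : ℝ) * (k:ℝ) * gch (x+(k:ℝ)) k
    = (x+1) * gch (x+2*(m:ℝ)+3) m := by
  rw [Finset.sum_range_succ']
  have step : ∀ i ∈ range (m+1),
      ((2*(m+1)-(i+1)).choose (m+1) : ℝ) * ((i+1:ℕ):ℝ) * gch (x+((i+1:ℕ):ℝ)) (i+1)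
      = (x+1) * (gch (x+1+(i:ℝ)) i * (((m+1)+m-i).choose (m-i) : ℝ)) := by
    intro i hi; rw [mem_range] at hi
    have e1 : 2*(m+1)-(i+1) = (m+1)+m-i := by omega
    have e2 : ((m+1)+m-i).choose (m+1) = ((m+1)+m-i).choose (m-i) := by
      rw [← Nat.choose_symm (by omega : m+1 ≤ (m+1)+m-i)]
      congr 1; omega
    rw [e1, e2]
    push_cast
    rw [show x+((i:ℝ)+1) = x+1+(i:ℝ) from by ring, gch_succ (x+1+(i:ℝ)) i,
        show x+1+(i:ℝ)-(i:ℝ) = x+1 from by ring]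
    have : ((i:ℝ)+1) ≠ 0 := by positivity
    field_simp
  rw [sum_congr rfl step, ← mul_sum, vand (m+1) m (x+1)]
  push_cast
  rw [show x+1+((m:ℝ)+1)+(m:ℝ)+1 = x+2*(m:ℝ)+3 from by ring]
  simp

lemma hasDerivAt_gch (c : ℝ) (k : ℕ) (x : ℝ) :
    HasDerivAt (fun y => gch (y+c) k)
      ((∑ i ∈ range k, ∏ j ∈ (range k).erase i, (x+c-(j:ℝ))) / (Nat.factorial k)) x := by
  have h : (fun y : ℝ => gch (y+c) k)
      = fun y => (∏ i ∈ range k, (y+(c-(i:ℝ)))) / (Nat.factorial k) := by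
    funext y; unfold gch; congr 1; exact prod_congr rfl fun i _ => by ring
  rw [h]
  have hp : HasDerivAt (fun y : ℝ => ∏ i ∈ range k, (y+(c-(i:ℝ))))
      (∑ i ∈ range k, (∏ j ∈ (range k).erase i, (x+(c-(j:ℝ)))) • (1:ℝ)) x :=
    HasDerivAt.fun_finsetProd (fun i _ => (hasDerivAt_id x).add_const _)
  have h2 := hp.div_const (Nat.factorial k : ℝ)
  convert h2 using 2
  · rfl
  · rfl
  apply sum_congr rfl; intro i _
  rw [smul_eq_mul, mul_one]
  exact prod_congr rfl fun j _ => by ring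

lemma deriv_val (c x : ℝ) (k : ℕ) (h : ∀ j ∈ range k, x+c-(j:ℝ) ≠ 0) :
    (∑ i ∈ range k, ∏ j ∈ (range k).erase i, (x+c-(j:ℝ))) / (Nat.factorial k)
    = gch (x+c) k * ∑ i ∈ range k, 1/(x+c-(i:ℝ)) := by
  have key : ∑ i ∈ range k, ∏ j ∈ (range k).erase i, (x+c-(j:ℝ))
      = (∏ j ∈ range k, (x+c-(j:ℝ))) * ∑ i ∈ range k, 1/(x+c-(i:ℝ)) := by
    rw [mul_sum]
    apply sum_congr rfl; intro i hi
    rw [mul_one_div, eq_div_iff (h i hi), prod_erase_mul _ _ hi]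
  rw [key, gch, mul_div_right_comm]

lemma sum_inv_eq_Hx (x : ℝ) (k : ℕ) : ∑ i ∈ range k, 1/(x+(k:ℝ)-(i:ℝ)) = Hx x k := by
  rw [Hx, ← sum_range_reflect (fun i => 1/(x+(i:ℝ)+1)) k]
  apply sum_congr rfl; intro i hi; rw [mem_range] at hi
  congr 1
  have h : ((k-1-i:ℕ):ℝ) = (k:ℝ)-1-(i:ℝ) := by
    rw [Nat.cast_sub (by omega), Nat.cast_sub (by omega)]
    norm_num
  rw [h]; ring

lemma Hsplit (x : ℝ) (m : ℕ) : Hx x (2*m+3) - Hx (x+1) (m+2)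
    = 1/(x+1) + ∑ i ∈ range m, 1/(x+(2*(m:ℝ)+3)-(i:ℝ)) := by
  rw [Hx, Hx, sum_range_succ' _ (2*m+2), show 2*m+2 = (m+2)+m from by ring, sum_range_add]
  have A : ∑ i ∈ range (m+2), (fun i : ℕ => 1/(x+(i:ℝ)+1)) (i+1)
      = ∑ i ∈ range (m+2), 1/((x+1)+(i:ℝ)+1) := by
    apply sum_congr rfl; intro i _; congr 1; push_cast; ring
  have B : ∑ i ∈ range m, (fun i : ℕ => 1/(x+(i:ℝ)+1)) ((m+2)+i+1)
      = ∑ i ∈ range m, 1/(x+(2*(m:ℝ)+3)-(i:ℝ)) := by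
    rw [← sum_range_reflect (fun i => 1/(x+(2*(m:ℝ)+3)-(i:ℝ))) m]
    apply sum_congr rfl; intro i hi; rw [mem_range] at hi
    congr 1
    have h : ((m-1-i:ℕ):ℝ) = (m:ℝ)-1-(i:ℝ) := by
      rw [Nat.cast_sub (by omega), Nat.cast_sub (by omega)]
      norm_num
    rw [h]; push_cast; ring
  rw [A, B]
  push_cast
  ring

theorem stmt15 (x : ℝ) (hx : ∀ i : ℕ, 1 ≤ i → x + (i:ℝ) ≠ 0) (n : ℕ) :
    ∑ k ∈ Finset.range (n+1),
        (((2*n-k).choose n : ℕ) : ℝ) * gch (x+(k:ℝ)) k * (k:ℝ) * Hx x k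
      = (x+1) * gchZ (x+2*(n:ℝ)+1) ((n:ℤ)-1) * (Hx x (2*n+1) - Hx (x+1) (n+1)) := by
  obtain _ | m := n
  · norm_num [gchZ, Hx]
  -- n = m+1
  set c : ℝ := 2*(m:ℝ)+3 with hc
  have hnz : ∀ k : ℕ, ∀ j ∈ range k, x+(k:ℝ)-(j:ℝ) ≠ 0 := by
    intro k j hj; rw [mem_range] at hj
    have : x+(k:ℝ)-(j:ℝ) = x + ((k-j:ℕ):ℝ) := by
      rw [Nat.cast_sub hj.le]; ring
    rw [this]; exact hx (k-j) (by omega)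
  have hnzc : ∀ j ∈ range m, x+c-(j:ℝ) ≠ 0 := by
    intro j hj; rw [mem_range] at hj
    have : x+c-(j:ℝ) = x + ((2*m+3-j:ℕ):ℝ) := by
      rw [Nat.cast_sub (by omega)]; push_cast; ring
    rw [this]; exact hx _ (by omega)
  -- derivative of LHS generating function
  have hP : HasDerivAt
      (fun y => ∑ k ∈ range (m+2), ((2*(m+1)-k).choose (m+1) : ℝ) * (k:ℝ) * gch (y+(k:ℝ)) k)
      (∑ k ∈ range (m+2), ((2*(m+1)-k).choose (m+1) : ℝ) * (k:ℝ) *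
        ((∑ i ∈ range k, ∏ j ∈ (range k).erase i, (x+(k:ℝ)-(j:ℝ))) / (Nat.factorial k))) x :=
    HasDerivAt.fun_sum (fun k _ => (hasDerivAt_gch (k:ℝ) k x).const_mul _)
  -- derivative of RHS generating function
  have hQ : HasDerivAt (fun y => (y+1) * gch (y+c) m)
      (1 * gch (x+c) m + (x+1) *
        ((∑ i ∈ range m, ∏ j ∈ (range m).erase i, (x+c-(j:ℝ))) / (Nat.factorial m))) x :=
    ((hasDerivAt_id x).add_const 1).mul (hasDerivAt_gch c m x)
  have hPQ : (fun y => ∑ k ∈ range (m+2), ((2*(m+1)-k).choose (m+1) : ℝ) * (k:ℝ) * gch (y+(k:ℝ)) k)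
      = (fun y => (y+1) * gch (y+c) m) := by
    funext y
    rw [keyId m y, hc]
    ring_nf
  rw [hPQ] at hP
  have hEq := hP.unique hQ
  -- identify the LHS sum with d1
  have hL : ∑ k ∈ Finset.range (m+1+1),
        (((2*(m+1)-k).choose (m+1) : ℕ) : ℝ) * gch (x+(k:ℝ)) k * (k:ℝ) * Hx x k
      = ∑ k ∈ range (m+2), ((2*(m+1)-k).choose (m+1) : ℝ) * (k:ℝ) *
        ((∑ i ∈ range k, ∏ j ∈ (range k).erase i, (x+(k:ℝ)-(j:ℝ))) / (Nat.factorial k)) := by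
    apply sum_congr rfl; intro k _
    rw [deriv_val _ _ _ (hnz k), sum_inv_eq_Hx]
    ring
  rw [hL, hEq, deriv_val _ _ _ hnzc]
  -- now handle RHS
  have hgz : gchZ (x+2*((m+1:ℕ):ℝ)+1) (((m+1:ℕ):ℤ)-1) = gch (x+c) m := by
    have h1 : ((m+1:ℕ):ℤ)-1 = (m:ℤ) := by push_cast; ring
    rw [h1, gchZ, if_neg (by omega)]
    norm_num
    congr 1
    rw [hc]; push_cast; ring
  rw [hgz, show 2*(m+1)+1 = 2*m+3 from by ring, show m+1+1 = m+2 from by ring, Hsplit, ← hc]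
  have hx1 : x+1 ≠ 0 := by
    have := hx 1 le_rfl; push_cast at this; simpa using this
  field_simp
end

section
/- For every nonnegative integer n, ∑_{k=0}^{n} C(2n-k, n) · k · H_k^{(2)} = (1/2) · C(2n+1, n-1) · ( H_{2n+1}^{(2)} - 2/n - (H_{2n+1} - H_n)(H_{2n+1} - H_n - 2 - 2/n) ), for n ≥ 1, where H_j^{(2)} = ∑ 1/i^2 and H_j = ∑ 1/i. -/
open Finset

noncomputable def H (n : ℕ) : ℝ := ∑ i ∈ Finset.range n, (1:ℝ)/(i+1)
noncomputable def H2 (n : ℕ) : ℝ := ∑ i ∈ Finset.range n, (1:ℝ)/((i:ℝ)+1)^2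

noncomputable def Pa (r m : ℕ) : ℝ := ∑ j ∈ Finset.range m, ((r+j).choose r : ℝ) / ((m - j : ℕ) : ℝ)
noncomputable def Qa (r m : ℕ) : ℝ := ∑ j ∈ Finset.range m, ((r+j).choose r : ℝ) / ((m - j : ℕ) : ℝ)^2

lemma H_succ (n : ℕ) : H (n+1) = H n + 1/((n:ℝ)+1) := by
  simp [H, Finset.sum_range_succ]

lemma H2_succ (n : ℕ) : H2 (n+1) = H2 n + 1/((n:ℝ)+1)^2 := by
  simp [H2, Finset.sum_range_succ]

lemma pascalP (r m : ℕ) : Pa (r+1) (m+1) = Pa (r+1) m + Pa r (m+1) := by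
  have key : ∀ j : ℕ, ((r+1+j).choose (r+1) : ℝ) = ((r+j).choose r : ℝ) + ((r+j).choose (r+1) : ℝ) := by
    intro j
    have : r+1+j = (r+j)+1 := by omega
    rw [this, Nat.choose_succ_succ']
    push_cast; ring
  unfold Pa
  rw [Finset.sum_congr rfl (fun j _ => by rw [key j, add_div])]
  rw [Finset.sum_add_distrib]
  rw [add_comm]
  congr 1
  rw [Finset.sum_range_succ']
  have h0 : ((r+0).choose (r+1) : ℝ) / ((m+1-0 : ℕ) : ℝ) = 0 := by
    simp [Nat.choose_eq_zero_of_lt]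
  rw [h0, add_zero]
  apply Finset.sum_congr rfl
  intro j hj
  rw [show r+(j+1) = r+1+j from by omega, show m+1-(j+1) = m-j from by omega]

lemma pascalQ (r m : ℕ) : Qa (r+1) (m+1) = Qa (r+1) m + Qa r (m+1) := by
  have key : ∀ j : ℕ, ((r+1+j).choose (r+1) : ℝ) = ((r+j).choose r : ℝ) + ((r+j).choose (r+1) : ℝ) := by
    intro j
    have : r+1+j = (r+j)+1 := by omega
    rw [this, Nat.choose_succ_succ']
    push_cast; ring
  unfold Qa
  rw [Finset.sum_congr rfl (fun j _ => by rw [key j, add_div])]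
  rw [Finset.sum_add_distrib]
  rw [add_comm]
  congr 1
  rw [Finset.sum_range_succ']
  have h0 : ((r+0).choose (r+1) : ℝ) / ((m+1-0 : ℕ) : ℝ)^2 = 0 := by
    simp [Nat.choose_eq_zero_of_lt]
  rw [h0, add_zero]
  apply Finset.sum_congr rfl
  intro j hj
  rw [show r+(j+1) = r+1+j from by omega, show m+1-(j+1) = m-j from by omega]

lemma Pa_closed (r m : ℕ) : Pa r m = (((r+m).choose r : ℕ) : ℝ) * (H (r+m) - H r) := by
  induction r generalizing m with
  | zero =>
    unfold Pa
    simp only [Nat.choose_zero_right, Nat.cast_one, Nat.zero_add, zero_add]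
    rw [show H 0 = 0 from by simp [H], sub_zero, one_mul]
    unfold H
    rw [← Finset.sum_range_reflect (fun j => (1:ℝ)/((j:ℝ)+1)) m]
    apply Finset.sum_congr rfl
    intro j hj
    simp only [Finset.mem_range] at hj
    have h1 : ((m - 1 - j : ℕ) : ℝ) = (m:ℝ) - 1 - j := by
      rw [Nat.cast_sub (by omega), Nat.cast_sub (by omega)]; push_cast; ring
    have h2 : ((m - j : ℕ) : ℝ) = (m:ℝ) - j := by
      rw [Nat.cast_sub (by omega)]
    simp only [one_div, h1, h2]
    congr 1; ring
  | succ r ih =>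
    induction m with
    | zero => simp [Pa, H]
    | succ m ihm =>
      rw [pascalP, ihm, ih (m+1)]
      have e1 : r + 1 + m = r + (m+1) := by omega
      have e2 : r + 1 + (m+1) = (r + (m+1)) + 1 := by omega
      rw [e1, e2, H_succ (r+(m+1)), H_succ r]
      have pas : (((r+(m+1)+1).choose (r+1) : ℕ) : ℝ)
          = ((r+(m+1)).choose r : ℝ) + ((r+(m+1)).choose (r+1) : ℝ) := by
        rw [Nat.choose_succ_succ']; push_cast; ring
      have key : ((r:ℝ)+(m:ℝ)+2) * (((r+(m+1)).choose r : ℕ) : ℝ)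
          = (((r+(m+1)+1).choose (r+1) : ℕ) : ℝ) * ((r:ℝ)+1) := by
        have h := Nat.add_one_mul_choose_eq (r+(m+1)) r
        have h' := congrArg (fun x : ℕ => (x : ℝ)) h
        push_cast at h'
        linarith [h']
      rw [pas] at key ⊢
      push_cast at key ⊢
      have d1 : ((r:ℝ)+1) ≠ 0 := by positivity
      have d2 : ((r:ℝ)+(m:ℝ)+2) ≠ 0 := by positivity
      field_simp
      ring_nf
      ring_nf at key
      linear_combination key

lemma absorb (r m : ℕ) : ((r:ℝ)+1) * Qa (r+1) m = ((r:ℝ)+(m:ℝ)+1) * Qa r m - Pa r m := by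
  unfold Qa Pa
  rw [Finset.mul_sum, Finset.mul_sum, ← Finset.sum_sub_distrib]
  apply Finset.sum_congr rfl
  intro j hj
  simp only [Finset.mem_range] at hj
  have hc : (((r+1+j).choose (r+1) : ℕ) : ℝ) * ((r:ℝ)+1) = ((r:ℝ)+(j:ℝ)+1) * (((r+j).choose r : ℕ) : ℝ) := by
    have h := Nat.add_one_mul_choose_eq (r+j) r
    have h' := congrArg (fun x : ℕ => (x : ℝ)) h
    push_cast at h'
    rw [show r+1+j = r+j+1 from by omega]
    linarith [h']
  have hd : ((m - j : ℕ) : ℝ) = (m:ℝ) - (j:ℝ) := by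
    rw [Nat.cast_sub (by omega)]
  have hdne : ((m:ℝ) - (j:ℝ)) ≠ 0 := by
    have : (j:ℝ) < (m:ℝ) := by exact_mod_cast hj
    linarith
  rw [hd]
  have expand : ((r:ℝ)+(m:ℝ)+1) * ((((r+j).choose r : ℕ):ℝ) / ((m:ℝ)-(j:ℝ))^2) - (((r+j).choose r : ℕ):ℝ) / ((m:ℝ)-(j:ℝ))
      = (((r:ℝ)+(j:ℝ)+1) * (((r+j).choose r : ℕ):ℝ)) / ((m:ℝ)-(j:ℝ))^2 := by
    field_simp
    ring
  rw [expand, ← hc]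
  ring

lemma choose_symm_central (n : ℕ) : ((2*n+1).choose n : ℝ) = ((2*n+1).choose (n+1) : ℝ) := by
  have : (2*n+1) - (n+1) = n := by omega
  rw [← Nat.choose_symm (by omega : n+1 ≤ 2*n+1), this]

lemma b1 (n : ℕ) : (((2*n+2).choose (n+1) : ℕ) : ℝ) = 2 * (((2*n+1).choose (n+1) : ℕ) : ℝ) := by
  rw [show 2*n+2 = (2*n+1)+1 from by ring, Nat.choose_succ_succ]
  push_cast
  rw [choose_symm_central]
  ring

lemma b2 (n : ℕ) : ((n:ℝ)+2) * (((2*n+3).choose (n+2) : ℕ) : ℝ)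
    = 2*(2*(n:ℝ)+3) * (((2*n+1).choose (n+1) : ℕ) : ℝ) := by
  have hp : (((2*n+3).choose (n+2) : ℕ) : ℝ)
      = (((2*n+2).choose (n+1) : ℕ) : ℝ) + (((2*n+2).choose (n+2) : ℕ) : ℝ) := by
    rw [show 2*n+3 = (2*n+2)+1 from by ring, Nat.choose_succ_succ]
    push_cast; ring
  have hs := Nat.add_one_mul_choose_eq (2*n+1) (n+1)
  have hs' := congrArg (fun x : ℕ => (x : ℝ)) hs
  push_cast at hs'
  rw [show (2*n+1)+1 = 2*n+2 from by ring] at hs'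
  rw [hp, b1 n]
  linarith [hs']

lemma Aclosed (n : ℕ) : Qa (n+1) n
    = (1/2) * (((2*n+1).choose (n+1) : ℕ) : ℝ) * (H2 (2*n+1) - (H (2*n+1) - H n)^2) := by
  induction n with
  | zero =>
    have h1 : H 1 = 1 := by simp [H]
    have h0 : H 0 = 0 := by simp [H]
    have h21 : H2 1 = 1 := by simp [H2]
    simp [Qa, h1, h0, h21]
  | succ n ih =>
    have p1 := pascalQ (n+1) n
    have a1 := absorb (n+1) (n+1)
    have a2 := absorb (n+1) n
    rw [Pa_closed] at a1 a2
    rw [ih] at a2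
    simp only [show (n+1)+(n+1) = 2*n+2 from by ring, show (n+1)+n = 2*n+1 from by ring,
      show (n+1)+1 = n+2 from by ring, show n+1+1 = n+2 from by ring] at p1 a1 a2 ⊢
    push_cast at p1 a1 a2
    have e3 : ((n:ℝ)+1) * Qa (n+2) (n+1) = (2*(n:ℝ)+3) * Qa (n+2) n
        + (((2*n+2).choose (n+1) : ℕ) : ℝ) * (H (2*n+2) - H (n+1)) := by
      linear_combination (-1 : ℝ) * a1 + (2*(n:ℝ)+3) * p1
    have e4 : ((n:ℝ)+1)*((n:ℝ)+2) * Qa (n+2) (n+1)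
        = (2*(n:ℝ)+3) * ( (2*(n:ℝ)+2) * ((1/2) * (((2*n+1).choose (n+1) : ℕ) : ℝ) * (H2 (2*n+1) - (H (2*n+1) - H n)^2))
            - (((2*n+1).choose (n+1) : ℕ) : ℝ) * (H (2*n+1) - H (n+1)) )
          + ((n:ℝ)+2) * ((((2*n+2).choose (n+1) : ℕ) : ℝ) * (H (2*n+2) - H (n+1))) := by
      linear_combination ((n:ℝ)+2) * e3 + (2*(n:ℝ)+3) * a2
    simp only [show 2*(n+1)+1 = 2*n+3 from by ring] at *
    have hne : ((n:ℝ)+1)*((n:ℝ)+2) ≠ 0 := by positivity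
    apply mul_left_cancel₀ hne
    rw [e4]
    have c3eq : (((2*n+3).choose (n+2) : ℕ) : ℝ)
        = 2*(2*(n:ℝ)+3) * (((2*n+1).choose (n+1) : ℕ) : ℝ) / ((n:ℝ)+2) := by
      rw [eq_div_iff (by positivity : ((n:ℝ)+2) ≠ 0)]
      linarith [b2 n]
    rw [c3eq, b1 n]
    rw [show (2*n+3) = (2*n+2)+1 from by ring, H_succ (2*n+2), H2_succ (2*n+2),
      show (2*n+2) = (2*n+1)+1 from by ring, H_succ (2*n+1), H2_succ (2*n+1), H_succ n]
    push_cast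
    have d1 : ((n:ℝ)+1) ≠ 0 := by positivity
    have d2 : ((n:ℝ)+2) ≠ 0 := by positivity
    have d3 : (2*(n:ℝ)+2) ≠ 0 := by positivity
    have d4 : (2*(n:ℝ)+3) ≠ 0 := by positivity
    have d5 : (2*(n:ℝ)+1+1) ≠ 0 := by positivity
    have d6 : (2*(n:ℝ)+2+1) ≠ 0 := by positivity
    field_simp
    ring

lemma Vnat (n : ℕ) : ∀ t, t ≤ n →
    (∑ a ∈ Finset.range t, (n-a) * ((n+a).choose n)) + (n+1) * ((n+t).choose (n+2))
      = n * ((n+t).choose (n+1)) := by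
  intro t
  induction t with
  | zero =>
    intro _
    rw [Nat.choose_eq_zero_of_lt (by omega), Nat.choose_eq_zero_of_lt (by omega)]
    simp
  | succ t ih =>
    intro ht
    have ht' : t ≤ n := by omega
    specialize ih ht'
    rw [Finset.sum_range_succ]
    have pas1 : (n+(t+1)).choose (n+2) = (n+t).choose (n+1) + (n+t).choose (n+2) := by
      rw [show n+(t+1) = (n+t)+1 from by ring, Nat.choose_succ_succ]
    have pas2 : (n+(t+1)).choose (n+1) = (n+t).choose n + (n+t).choose (n+1) := by
      rw [show n+(t+1) = (n+t)+1 from by ring, Nat.choose_succ_succ]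
    have key := Nat.choose_succ_right_eq (n+t) n
    rw [show n+t-n = t from by omega] at key
    zify [ht'] at ih key pas1 pas2 ⊢
    linear_combination ih + key + ((n:ℤ)+1)*pas1 - (n:ℤ)*pas2

lemma innerSumV (n i : ℕ) (hi : i ≤ n) :
    ∑ k ∈ Finset.Ico (i+1) (n+1), (((2*n-k).choose n : ℕ):ℝ) * (k:ℝ)
      = (n:ℝ) * (((2*n-i).choose (n+1) : ℕ):ℝ) - ((n:ℝ)+1) * (((2*n-i).choose (n+2) : ℕ):ℝ) := by
  rw [Finset.sum_Ico_eq_sum_range]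
  rw [show (n+1)-(i+1) = n-i from by omega]
  have step1 : ∑ j ∈ Finset.range (n-i), (((2*n-(i+1+j)).choose n : ℕ):ℝ) * ((i+1+j : ℕ):ℝ)
      = ∑ j ∈ Finset.range (n-i), (((n-((n-i)-1-j)) * ((n+((n-i)-1-j)).choose n) : ℕ) : ℝ) := by
    apply Finset.sum_congr rfl
    intro j hj
    simp only [Finset.mem_range] at hj
    rw [show n-((n-i)-1-j) = i+1+j from by omega, show n+((n-i)-1-j) = 2*n-(i+1+j) from by omega]
    push_cast
    ring
  rw [step1]
  rw [Finset.sum_range_reflect (fun a => (((n-a) * ((n+a).choose n) : ℕ) : ℝ)) (n-i)]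
  rw [← Nat.cast_sum]
  have hv := Vnat n (n-i) (by omega)
  rw [show n+(n-i) = 2*n-i from by omega] at hv
  have hv' := congrArg (fun x : ℕ => (x : ℝ)) hv
  push_cast at hv'
  push_cast
  linarith [hv']

lemma X1 (n : ℕ) : ∑ i ∈ Finset.range (n+1), (((2*n-i).choose (n+1) : ℕ):ℝ) / ((i:ℝ)+1)^2
    = Qa (n+1) n := by
  rw [Finset.sum_range_succ, show 2*n-n = n from by omega,
    Nat.choose_eq_zero_of_lt (by omega : n < n+1)]
  simp only [Nat.cast_zero, zero_div, add_zero]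
  unfold Qa
  conv_rhs => rw [← Finset.sum_range_reflect]
  apply Finset.sum_congr rfl
  intro i hi
  simp only [Finset.mem_range] at hi
  rw [show n+1+(n-1-i) = 2*n-i from by omega, show n-(n-1-i) = i+1 from by omega]
  push_cast
  ring

lemma X2 (m : ℕ) : ∑ i ∈ Finset.range (m+2), (((2*(m+1)-i).choose (m+3) : ℕ):ℝ) / ((i:ℝ)+1)^2
    = Qa (m+3) m := by
  rw [Finset.sum_range_succ, Finset.sum_range_succ]
  rw [show 2*(m+1)-(m+1) = m+1 from by omega, Nat.choose_eq_zero_of_lt (by omega : m+1 < m+3)]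
  rw [show 2*(m+1)-m = m+2 from by omega, Nat.choose_eq_zero_of_lt (by omega : m+2 < m+3)]
  simp only [Nat.cast_zero, zero_div, add_zero]
  unfold Qa
  conv_rhs => rw [← Finset.sum_range_reflect]
  apply Finset.sum_congr rfl
  intro i hi
  simp only [Finset.mem_range] at hi
  rw [show m+3+(m-1-i) = 2*(m+1)-i from by omega, show m-(m-1-i) = i+1 from by omega]
  push_cast
  ring

lemma swap_tri (n : ℕ) (f : ℕ → ℕ → ℝ) :
    ∑ k ∈ Finset.range (n+1), ∑ i ∈ Finset.range k, f k i
      = ∑ i ∈ Finset.range (n+1), ∑ k ∈ Finset.Ico (i+1) (n+1), f k i := by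
  have h := Finset.sum_Ico_Ico_comm' 0 (n+1) (fun i k => f k i)
  simp only [Nat.Ico_zero_eq_range] at h
  exact h.symm

theorem stmt17 (n : ℕ) (hn : 1 ≤ n) :
    ∑ k ∈ Finset.range (n+1), (((2*n-k).choose n : ℕ) : ℝ) * (k:ℝ) * H2 k
      = (1/2) * (((2*n+1).choose (n-1) : ℕ) : ℝ) *
        (H2 (2*n+1) - 2/(n:ℝ)
          - (H (2*n+1) - H n) * (H (2*n+1) - H n - 2 - 2/(n:ℝ))) := by
  -- Step A: reduce LHS to n * Qa (n+1) n - (n+1) * Qa (n+2) (n-1)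
  have hL : ∑ k ∈ Finset.range (n+1), (((2*n-k).choose n : ℕ) : ℝ) * (k:ℝ) * H2 k
      = ∑ i ∈ Finset.range (n+1),
          (((n:ℝ) * (((2*n-i).choose (n+1) : ℕ):ℝ) - ((n:ℝ)+1) * (((2*n-i).choose (n+2) : ℕ):ℝ))
            * ((1:ℝ)/((i:ℝ)+1)^2)) := by
    have step1 : ∑ k ∈ Finset.range (n+1), (((2*n-k).choose n : ℕ) : ℝ) * (k:ℝ) * H2 k
        = ∑ k ∈ Finset.range (n+1), ∑ i ∈ Finset.range k,
            ((((2*n-k).choose n : ℕ) : ℝ) * (k:ℝ)) * ((1:ℝ)/((i:ℝ)+1)^2) := by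
      apply Finset.sum_congr rfl
      intro k _
      rw [H2, Finset.mul_sum]
    rw [step1, swap_tri]
    apply Finset.sum_congr rfl
    intro i hi
    simp only [Finset.mem_range] at hi
    rw [← Finset.sum_mul]
    rw [innerSumV n i (by omega)]
  rw [hL]
  obtain ⟨m, rfl⟩ : ∃ m, n = m+1 := ⟨n-1, by omega⟩
  have split : ∑ i ∈ Finset.range ((m+1)+1),
        (((((m+1):ℕ):ℝ) * (((2*(m+1)-i).choose ((m+1)+1) : ℕ):ℝ)
          - ((((m+1):ℕ):ℝ)+1) * (((2*(m+1)-i).choose ((m+1)+2) : ℕ):ℝ)) * ((1:ℝ)/((i:ℝ)+1)^2))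
      = ((m:ℝ)+1) * (∑ i ∈ Finset.range (m+2), (((2*(m+1)-i).choose (m+2) : ℕ):ℝ) / ((i:ℝ)+1)^2)
        - ((m:ℝ)+2) * (∑ i ∈ Finset.range (m+2), (((2*(m+1)-i).choose (m+3) : ℕ):ℝ) / ((i:ℝ)+1)^2) := by
    rw [Finset.mul_sum, Finset.mul_sum, ← Finset.sum_sub_distrib]
    apply Finset.sum_congr (by norm_num) ?_
    intro i hi
    rw [show (m+1)+1 = m+2 from by ring, show (m+1)+2 = m+3 from by ring]
    push_cast
    ring
  rw [show ((m+1):ℕ)+1 = m+2 from by ring] at split ⊢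
  rw [split]
  have x1 := X1 (m+1)
  rw [show (m+1)+1 = m+2 from by ring] at x1
  rw [x1, X2 m]
  -- relations between the Qa's
  have pq := pascalQ (m+1) m
  have ab1 := absorb (m+2) m
  have ab2 := absorb (m+1) (m+1)
  have ac := Aclosed (m+1)
  rw [Pa_closed] at ab1 ab2
  simp only [show (m+2)+1 = m+3 from by ring, show (m+2)+m = 2*m+2 from by ring,
    show (m+1)+(m+1) = 2*m+2 from by ring, show (m+1)+1 = m+2 from by ring,
    show m+1+1 = m+2 from by ring, show 2*(m+1)+1 = 2*m+3 from by ring] at pq ab1 ab2 ac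
  push_cast at pq ab1 ab2 ac
  have eD : (2*(m:ℝ)+3) * Qa (m+1) (m+1) = ((m:ℝ)+2) * Qa (m+2) (m+1)
      + (((2*m+2).choose (m+1) : ℕ) : ℝ) * (H (2*m+2) - H (m+1)) := by
    linear_combination (-1 : ℝ) * ab2
  have eZ : (2*(m:ℝ)+3) * Qa (m+2) m = ((m:ℝ)+1) * Qa (m+2) (m+1)
      - (((2*m+2).choose (m+1) : ℕ) : ℝ) * (H (2*m+2) - H (m+1)) := by
    linear_combination (-(2*(m:ℝ)+3))*pq + (-1 : ℝ)*eD
  have hne : ((m:ℝ)+3)*(2*(m:ℝ)+3) ≠ 0 := by positivity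
  have eW : ((m:ℝ)+3)*(2*(m:ℝ)+3) * Qa (m+3) m
      = (2*(m:ℝ)+3)*(((m:ℝ)+1) * Qa (m+2) (m+1)
          - (((2*m+2).choose (m+1) : ℕ) : ℝ) * (H (2*m+2) - H (m+1)))
        - (2*(m:ℝ)+3)*((((2*m+2).choose (m+2) : ℕ) : ℝ) * (H (2*m+2) - H (m+2))) := by
    linear_combination (2*(m:ℝ)+3)*ab1 + (2*(m:ℝ)+3)*eZ
  rw [ac] at eW
  have Weq : Qa (m+3) m
      = ((2*(m:ℝ)+3)*(((m:ℝ)+1) * ((1/2) * (((2*m+3).choose (m+2) : ℕ) : ℝ) * (H2 (2*m+3) - (H (2*m+3) - H (m+1))^2))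
          - (((2*m+2).choose (m+1) : ℕ) : ℝ) * (H (2*m+2) - H (m+1)))
        - (2*(m:ℝ)+3)*((((2*m+2).choose (m+2) : ℕ) : ℝ) * (H (2*m+2) - H (m+2))))
        / (((m:ℝ)+3)*(2*(m:ℝ)+3)) := by
    rw [eq_div_iff hne]
    linear_combination eW
  rw [ac, Weq]
  -- binomial relations
  have k3 := Nat.choose_succ_right_eq (2*m+2) (m+1)
  rw [show 2*m+2-(m+1) = m+1 from by omega] at k3
  have k3' := congrArg (fun x : ℕ => (x : ℝ)) k3
  push_cast at k3'
  have hp2 : ((2*m+3).choose (m+2) : ℕ) = (2*m+2).choose (m+1) + (2*m+2).choose (m+2) := by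
    rw [show 2*m+3 = (2*m+2)+1 from by ring, Nat.choose_succ_succ]
  have hp2' := congrArg (fun x : ℕ => (x : ℝ)) hp2
  push_cast at hp2'
  have k1 := Nat.choose_succ_right_eq (2*m+3) m
  rw [show 2*m+3-m = m+3 from by omega] at k1
  have k1' := congrArg (fun x : ℕ => (x : ℝ)) k1
  push_cast at k1'
  have hp1 : ((2*m+3).choose (m+1) : ℕ) = (2*m+2).choose m + (2*m+2).choose (m+1) := by
    rw [show 2*m+3 = (2*m+2)+1 from by ring, Nat.choose_succ_succ]
  have hp1' := congrArg (fun x : ℕ => (x : ℝ)) hp1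
  push_cast at hp1'
  have k4 := Nat.choose_succ_right_eq (2*m+2) m
  rw [show 2*m+2-m = m+2 from by omega] at k4
  have k4' := congrArg (fun x : ℕ => (x : ℝ)) k4
  push_cast at k4'
  set c : ℝ := (((2*m+2).choose (m+1) : ℕ) : ℝ) with hc
  have d2 : ((m:ℝ)+2) ≠ 0 := by positivity
  have d3 : ((m:ℝ)+3) ≠ 0 := by positivity
  have cP1 : (((2*m+2).choose (m+2) : ℕ) : ℝ) = c*((m:ℝ)+1)/((m:ℝ)+2) := by
    rw [eq_div_iff d2]; linear_combination k3'
  have cA : (((2*m+3).choose (m+2) : ℕ) : ℝ) = c*(2*(m:ℝ)+3)/((m:ℝ)+2) := by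
    rw [eq_div_iff d2]; linear_combination hp2' * ((m:ℝ)+2) + k3'
  have cR : (((2*m+3).choose (m) : ℕ) : ℝ) = c*(2*(m:ℝ)+3)*((m:ℝ)+1)/(((m:ℝ)+3)*((m:ℝ)+2)) := by
    rw [eq_div_iff (by positivity : ((m:ℝ)+3)*((m:ℝ)+2) ≠ 0)]
    linear_combination (-((m:ℝ)+2))*k1' + ((m:ℝ)+1)*((m:ℝ)+2)*hp1' + (-((m:ℝ)+1))*k4'
  -- harmonic relations
  have hH : H (2*m+3) = H (2*m+2) + 1/(2*(m:ℝ)+3) := by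
    rw [show 2*m+3 = (2*m+2)+1 from by ring, H_succ]
    push_cast; ring_nf
  have hH2 : H2 (2*m+3) = H2 (2*m+2) + 1/(2*(m:ℝ)+3)^2 := by
    rw [show 2*m+3 = (2*m+2)+1 from by ring, H2_succ]
    push_cast; ring_nf
  have hHm : H (m+2) = H (m+1) + 1/((m:ℝ)+2) := by
    rw [show m+2 = (m+1)+1 from by ring, H_succ]
    push_cast; ring_nf
  rw [show (m+1)-1 = m from by omega, show 2*(m+1)+1 = 2*m+3 from by ring]
  rw [cP1, cA, cR, hH, hH2, hHm]
  push_cast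
  have d4 : (2*(m:ℝ)+3) ≠ 0 := by positivity
  have d1 : ((m:ℝ)+1) ≠ 0 := by positivity
  field_simp
  ring
end

section
/- For every integer n ≥ 2, ∑_{k=0}^{n} C(2n-k, n) · k^2 · H_k^{(2)} = [(3n+1)/(2(n-1))] · C(2n+1, n-2) · ( H_{2n+1}^{(2)} - (H_{2n+1} - H_n)(H_{2n+1} - H_n - 2(n+1)(2n-1)/(n(3n+1))) + 2(n^2-n+1)/(n(3n+1)) ). -/
open Finset

noncomputable def Wo (a n : ℕ) : ℝ := ∑ i ∈ Finset.range n, (H (a+i+1) - H a)/((i:ℝ)+1)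
noncomputable def Qs (a n : ℕ) : ℝ := ∑ i ∈ Finset.range n, (((a+n-1-i).choose (n-1-i) : ℕ) : ℝ)/((i:ℝ)+1)^2

lemma H20 : H2 0 = 0 := by simp [H2]

lemma Hsucc (k : ℕ) : H (k+1) = H k + 1/((k:ℝ)+1) := by
  simp [H, Finset.sum_range_succ]
lemma H2succ (k : ℕ) : H2 (k+1) = H2 k + 1/((k:ℝ)+1)^2 := by
  simp [H2, Finset.sum_range_succ]
lemma H0 : H 0 = 0 := by simp [H]
lemma sum_inv_shift (a k : ℕ) : ∑ i ∈ range k, (1:ℝ)/((a:ℝ)+i+1) = H (a+k) - H a := by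
  induction k with
  | zero => simp
  | succ k ih =>
    rw [Finset.sum_range_succ, ih]
    have : a + (k+1) = (a+k)+1 := by omega
    rw [this, Hsucc]; push_cast; ring

lemma Wshift1 (a n : ℕ) : Wo a n = Wo (a+1) n + (H (a+1+n) - H (a+1))/((a:ℝ)+1) := by
  have key : Wo a n - Wo (a+1) n = (H (a+1+n) - H (a+1))/((a:ℝ)+1) := by
    rw [Wo, Wo, ← Finset.sum_sub_distrib]
    have : ∀ i ∈ range n, (H (a+i+1) - H a)/((i:ℝ)+1) - (H (a+1+i+1) - H (a+1))/((i:ℝ)+1)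
        = (1/((a:ℝ)+1)) * (1/(((a+1:ℕ):ℝ)+i+1)) := by
      intro i _
      have h1 : a+1+i+1 = (a+i+1)+1 := by omega
      have h2 : H ((a+i+1)+1) = H (a+i+1) + 1/(((a:ℝ)+i+1)+1) := by
        rw [Hsucc]; push_cast; ring
      rw [h1, h2, Hsucc a]
      have hi : ((i:ℝ)+1) ≠ 0 := by positivity
      have ha : ((a:ℝ)+1) ≠ 0 := by positivity
      have hai : ((a:ℝ)+i+1+1) ≠ 0 := by positivity
      push_cast
      field_simp
      ring
    rw [Finset.sum_congr rfl this, ← Finset.mul_sum, sum_inv_shift (a+1) n]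
    have : a+1+n = a+1+n := rfl
    rw [div_eq_mul_inv, mul_comm]
    congr 1
    · norm_num
  linarith [key]

lemma Wshift2 (a n : ℕ) : Wo a (n+1) = Wo a n + (H (a+n+1) - H a)/((n:ℝ)+1) := by
  rw [Wo, Finset.sum_range_succ]; rfl

lemma Wdiag (n : ℕ) : Wo n n = H2 n / 2 := by
  induction n with
  | zero => simp [Wo, H2]
  | succ n ih =>
    have e1 : Wo (n+1) (n+1) = Wo (n+1) n + (H (n+1+n+1) - H (n+1))/((n:ℝ)+1) := Wshift2 (n+1) n
    have e2 : Wo n n = Wo (n+1) n + (H (n+1+n) - H (n+1))/((n:ℝ)+1) := Wshift1 n n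
    have e3 : Wo (n+1) n = H2 n/2 - (H (n+1+n) - H (n+1))/((n:ℝ)+1) := by
      rw [ih] at e2; linarith
    have h2 : H (n+1+n+1) = H (n+1+n) + 1/(2*(n:ℝ)+1+1) := by
      have h1 : n+1+n+1 = (n+1+n)+1 := by omega
      rw [h1, Hsucc]; push_cast; ring
    rw [e1, e3, h2, H2succ]
    have ha : ((n:ℝ)+1) ≠ 0 := by positivity
    have hb : (2*(n:ℝ)+1+1) ≠ 0 := by positivity
    field_simp
    ring

lemma Wo0 (n : ℕ) : Wo 0 n = (H n^2 + H2 n)/2 := by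
  induction n with
  | zero => simp [Wo, H2, H]
  | succ n ih =>
    rw [Wshift2 0 n, ih, H0]
    have h0 : (0:ℕ)+n+1 = n+1 := by omega
    rw [h0, Hsucc, H2succ]
    have ha : ((n:ℝ)+1) ≠ 0 := by positivity
    field_simp
    ring

lemma Qpascal (a n : ℕ) : Qs (a+1) (n+1) = Qs a (n+1) + Qs (a+1) n := by
  rw [Qs, Qs, Qs, Finset.sum_range_succ, Finset.sum_range_succ
    (fun i => (((a+(n+1)-1-i).choose ((n+1)-1-i) : ℕ) : ℝ)/((i:ℝ)+1)^2)]
  have main : ∀ i ∈ range n,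
      ((((a+1)+(n+1)-1-i).choose ((n+1)-1-i) : ℕ):ℝ)/((i:ℝ)+1)^2
      = (((a+(n+1)-1-i).choose ((n+1)-1-i) : ℕ):ℝ)/((i:ℝ)+1)^2
        + ((((a+1)+n-1-i).choose (n-1-i):ℕ):ℝ)/((i:ℝ)+1)^2 := by
    intro i hi
    simp only [Finset.mem_range] at hi
    have h1 : (a+1)+(n+1)-1-i = (a+n-i)+1 := by omega
    have h2 : (n+1)-1-i = (n-1-i)+1 := by omega
    have h3 : a+(n+1)-1-i = a+n-i := by omega
    have h4 : (a+1)+n-1-i = a+n-i := by omega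
    rw [h1, h2, h3, h4, Nat.choose_succ_succ]
    push_cast
    ring
  rw [Finset.sum_congr rfl main, Finset.sum_add_distrib]
  have l1 : (a+1)+(n+1)-1-n = a+1 := by omega
  have l2 : a+(n+1)-1-n = a := by omega
  have l3 : (n+1)-1-n = 0 := by omega
  rw [l1, l2, l3]
  simp [Nat.choose_zero_right]
  ring

set_option maxHeartbeats 3000000 in
lemma Qgen : ∀ n a, Qs a n = (((a+n).choose n : ℕ):ℝ) *
    ((H2 (a+n) - H2 a - (H (a+n) - H a)^2)/2 + Wo a n) := by
  intro n
  induction n with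
  | zero => intro a; simp [Qs, Wo]
  | succ n ih =>
    intro a
    induction a with
    | zero =>
      have hq : Qs 0 (n+1) = H2 (n+1) := by
        rw [Qs, H2]
        apply Finset.sum_congr rfl
        intro i hi
        simp only [Finset.mem_range] at hi
        have h1 : 0+(n+1)-1-i = n-i := by omega
        have h2 : (n+1)-1-i = n-i := by omega
        rw [h1, h2, Nat.choose_self]
        norm_num
      rw [hq]
      simp only [Nat.zero_add, Nat.choose_self, Nat.cast_one, one_mul]
      have h3 : (0:ℕ)+(n+1) = n+1 := by omega
      rw [h3] at *
      rw [Wo0, H0, H20]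
      ring
    | succ a iha =>
      rw [Qpascal a n, iha, ih (a+1)]
      have n1 : a+(n+1) = a+n+1 := by omega
      have n2 : (a+1)+n = a+n+1 := by omega
      have n3 : (a+1)+(n+1) = a+n+2 := by omega
      simp only [n1, n2, n3]
      have e4 : Wo a (n+1) = Wo (a+1) (n+1) + (H (a+n+2) - H (a+1))/((a:ℝ)+1) := by
        have h := Wshift1 a (n+1)
        rwa [show a+1+(n+1) = a+n+2 from by omega] at h
      have e5 : Wo (a+1) n = Wo (a+1) (n+1) - (H (a+n+2) - H (a+1))/((n:ℝ)+1) := by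
        have h := Wshift2 (a+1) n
        rw [show (a+1)+n+1 = a+n+2 from by omega] at h
        linarith
      rw [e4, e5]
      have hH : H (a+n+1) = H (a+n+2) - 1/((a:ℝ)+(n:ℝ)+2) := by
        have h := Hsucc (a+n+1)
        rw [show a+n+1+1 = a+n+2 from by omega] at h
        push_cast at h
        rw [show (a:ℝ)+(n:ℝ)+1+1 = (a:ℝ)+(n:ℝ)+2 from by ring] at h
        linarith
      have hH2 : H2 (a+n+1) = H2 (a+n+2) - 1/((a:ℝ)+(n:ℝ)+2)^2 := by
        have h := H2succ (a+n+1)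
        rw [show a+n+1+1 = a+n+2 from by omega] at h
        push_cast at h
        rw [show (a:ℝ)+(n:ℝ)+1+1 = (a:ℝ)+(n:ℝ)+2 from by ring] at h
        linarith
      have hHa : H a = H (a+1) - 1/((a:ℝ)+1) := by
        have h := Hsucc a; linarith
      have hH2a : H2 a = H2 (a+1) - 1/((a:ℝ)+1)^2 := by
        have h := H2succ a; linarith
      rw [hH, hH2, hHa, hH2a]
      have hc1 : ((a+n+2) * ((a+n+1).choose n) : ℕ) = ((a+n+2).choose (n+1)) * (n+1) := by
        have h := Nat.add_one_mul_choose_eq (a+n+1) n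
        simpa using h
      have hc2 : ((a+n+2).choose (n+1)) = (a+n+1).choose n + (a+n+1).choose (n+1) := by
        have h := Nat.choose_succ_succ (a+n+1) n
        simpa using h
      have hx : ((a:ℝ)+(n:ℝ)+2) * ((a+n+1).choose n : ℝ) = ((a+n+2).choose (n+1) : ℝ) * ((n:ℝ)+1) := by
        exact_mod_cast congrArg (Nat.cast : ℕ → ℝ) hc1
      have hy : ((a+n+2).choose (n+1) : ℝ) = ((a+n+1).choose n : ℝ) + ((a+n+1).choose (n+1) : ℝ) := by
        exact_mod_cast congrArg (Nat.cast : ℕ → ℝ) hc2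
      have hden : ((a:ℝ)+(n:ℝ)+2) ≠ 0 := by positivity
      have hx' : ((a+n+1).choose n : ℝ) = ((a+n+2).choose (n+1) : ℝ) * ((n:ℝ)+1) / ((a:ℝ)+(n:ℝ)+2) := by
        field_simp
        linarith [hx]
      have hy' : ((a+n+1).choose (n+1) : ℝ) = ((a+n+2).choose (n+1) : ℝ) * ((a:ℝ)+1) / ((a:ℝ)+(n:ℝ)+2) := by
        field_simp
        nlinarith [hx, hy]
      rw [hx', hy']
      have ha1 : ((a:ℝ)+1) ≠ 0 := by positivity
      have hn1 : ((n:ℝ)+1) ≠ 0 := by positivity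
      push_cast
      set A := (a:ℝ) with hA
      set N := (n:ℝ) with hN
      set c := (((a+n+2).choose (n+1) : ℕ) : ℝ) with hc
      set P := H (a+n+2) with hP
      set p := H (a+1) with hp
      set P2 := H2 (a+n+2) with hP2
      set p2 := H2 (a+1) with hp2
      set w := Wo (a+1) (n+1) with hw
      field_simp
      ring

lemma termdec (n k : ℕ) (hk : k ≤ n) :
    (((2*n-k).choose n : ℕ) : ℝ) * (k:ℝ)^2
    = (2*(n:ℝ)+1)^2 * (((2*n-k).choose n : ℕ) : ℝ)
      - (4*(n:ℝ)+3)*((n:ℝ)+1) * (((2*n+1-k).choose (n+1) : ℕ) : ℝ)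
      + ((n:ℝ)+1)*((n:ℝ)+2) * (((2*n+2-k).choose (n+2) : ℕ) : ℝ) := by
  have h1 : 2*n+1-k = (2*n-k)+1 := by omega
  have h2 : 2*n+2-k = (2*n-k)+2 := by omega
  rw [h1, h2]
  have e1 := Nat.add_one_mul_choose_eq (2*n-k) n
  have e2 := Nat.add_one_mul_choose_eq ((2*n-k)+1) (n+1)
  have e1c := congrArg (Nat.cast (R:=ℝ)) e1
  have e2c := congrArg (Nat.cast (R:=ℝ)) e2
  push_cast at e1c e2c
  have hC : (((2*n-k : ℕ)) : ℝ) = 2*(n:ℝ) - k := by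
    have : k ≤ 2*n := by omega
    push_cast [this]
    ring
  rw [hC] at e1c e2c
  have hy : ((n:ℝ)+1) * (((2*n-k)+1).choose (n+1) : ℝ)
      = (2*(n:ℝ)-k+1) * (((2*n-k).choose n : ℕ) : ℝ) := by linarith [e1c]
  have hz : ((n:ℝ)+1)*((n:ℝ)+2) * ((((2*n-k)+2).choose (n+2) : ℕ) : ℝ)
      = (2*(n:ℝ)-k+1)*(2*(n:ℝ)-k+2) * (((2*n-k).choose n : ℕ) : ℝ) := by
    linear_combination (-((n:ℝ)+1))*e2c + (2*(n:ℝ)-k+2)*hy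
  linear_combination (4*(n:ℝ)+3)*hy - hz

lemma swaplem (N : ℕ) (f g : ℕ → ℝ) :
    ∑ k ∈ range N, f k * (∑ j ∈ range k, g j)
    = ∑ j ∈ range N, g j * (∑ k ∈ Ico (j+1) N, f k) := by
  induction N with
  | zero => simp
  | succ N ih =>
    rw [Finset.sum_range_succ, ih, Finset.sum_range_succ]
    have hlast : ∑ k ∈ Ico (N+1) (N+1), f k = 0 := by simp
    rw [hlast, mul_zero, add_zero]
    have : ∀ j ∈ range N, g j * (∑ k ∈ Ico (j+1) (N+1), f k)
        = g j * (∑ k ∈ Ico (j+1) N, f k) + g j * f N := by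
      intro j hj
      simp only [Finset.mem_range] at hj
      rw [Finset.sum_Ico_succ_top (by omega : j+1 ≤ N)]
      ring
    rw [Finset.sum_congr rfl this, Finset.sum_add_distrib, ← Finset.sum_mul]
    ring

lemma hockey_s19 (b : ℕ) : ∀ t, ∑ i ∈ range t, (b+i).choose b = (b+t).choose (b+1) := by
  intro t
  induction t with
  | zero => simp [Nat.choose_eq_zero_of_lt]
  | succ t ih =>
    rw [Finset.sum_range_succ, ih]
    have : b+(t+1) = (b+t)+1 := by omega
    rw [this, Nat.choose_succ_succ (b+t) b]
    simp only [Nat.succ_eq_add_one]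
    omega

lemma innerlem (n r j : ℕ) (hj : j < n) :
    ∑ k ∈ Ico (j+1) (n+1), (((2*n+r-k).choose (n+r) : ℕ) : ℝ)
    = (((2*n+r-j).choose (n+r+1) : ℕ) : ℝ) := by
  rw [Finset.sum_Ico_eq_sum_range]
  have hlen : n+1-(j+1) = n-j := by omega
  rw [hlen, ← Finset.sum_range_reflect]
  have : ∀ i ∈ range (n-j), (((2*n+r-(j+1+(n-j-1-i))).choose (n+r) : ℕ) : ℝ)
      = (((n+r+i).choose (n+r) : ℕ) : ℝ) := by
    intro i hi
    simp only [Finset.mem_range] at hi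
    congr 2
    omega
  rw [Finset.sum_congr rfl this]
  have hcast : ∑ i ∈ range (n-j), (((n+r+i).choose (n+r) : ℕ) : ℝ)
      = (((∑ i ∈ range (n-j), (n+r+i).choose (n+r) : ℕ)) : ℝ) := by
    push_cast; rfl
  rw [hcast, hockey_s19 (n+r) (n-j)]
  congr 2
  omega

lemma Srlem (n r : ℕ) :
    ∑ k ∈ range (n+1), (((2*n+r-k).choose (n+r) : ℕ) : ℝ) * H2 k = Qs (n+r+1) n := by
  have key : (∑ k ∈ range (n+1), (((2*n+r-k).choose (n+r) : ℕ) : ℝ) * ∑ j ∈ range k, (1:ℝ)/((j:ℝ)+1)^2)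
      = ∑ j ∈ range (n+1), ((1:ℝ)/((j:ℝ)+1)^2) *
        (∑ k ∈ Ico (j+1) (n+1), (((2*n+r-k).choose (n+r) : ℕ) : ℝ)) :=
    swaplem (n+1) _ _
  calc ∑ k ∈ range (n+1), (((2*n+r-k).choose (n+r) : ℕ) : ℝ) * H2 k
      = ∑ j ∈ range (n+1), ((1:ℝ)/((j:ℝ)+1)^2) *
          (∑ k ∈ Ico (j+1) (n+1), (((2*n+r-k).choose (n+r) : ℕ) : ℝ)) := key
    _ = ∑ j ∈ range n, ((1:ℝ)/((j:ℝ)+1)^2) *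
          (∑ k ∈ Ico (j+1) (n+1), (((2*n+r-k).choose (n+r) : ℕ) : ℝ)) := by
        rw [Finset.sum_range_succ]
        simp
    _ = Qs (n+r+1) n := by
        rw [Qs]
        apply Finset.sum_congr rfl
        intro j hj
        simp only [Finset.mem_range] at hj
        rw [innerlem n r j hj]
        have harg : (n+r+1)+n-1-j = 2*n+r-j := by omega
        have hsym : (2*n+r-j).choose (n-1-j) = (2*n+r-j).choose (n+r+1) := by
          have hle : n+r+1 ≤ 2*n+r-j := by omega
          have : (2*n+r-j) - (n+r+1) = n-1-j := by omega
          rw [← this, Nat.choose_symm hle]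
        rw [harg, hsym]
        ring

-- binomial ratio lemmas
lemma bin1 (n : ℕ) : ((2*n+2).choose n) * (n+2) = 2*(n+1)*((2*n+1).choose n) := by
  have hsym : (2*n+1).choose (n+1) = (2*n+1).choose n := by
    have h : n ≤ 2*n+1 := by omega
    have := Nat.choose_symm h
    rwa [show 2*n+1-n = n+1 from by omega] at this
  have hp : (2*n+2).choose (n+1) = (2*n+1).choose n + (2*n+1).choose (n+1) := by
    have := Nat.choose_succ_succ (2*n+1) n
    simpa [show (2*n+1)+1 = 2*n+2 from by omega] using this
  have hr := Nat.choose_succ_right_eq (2*n+2) n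
  rw [show 2*n+2-n = n+2 from by omega] at hr
  -- hr : (2*n+2).choose (n+1) * (n+1) = (2*n+2).choose n * (n+2)
  rw [← hr, hp, hsym]
  ring
lemma bin2 (n : ℕ) : ((2*n+3).choose n) * ((n+2)*(n+3)) = 2*(n+1)*(2*n+3)*((2*n+1).choose n) := by
  have hsym : (2*n+1).choose (n+1) = (2*n+1).choose n := by
    have h : n ≤ 2*n+1 := by omega
    have := Nat.choose_symm h
    rwa [show 2*n+1-n = n+1 from by omega] at this
  have hp2 : (2*n+2).choose (n+1) = (2*n+1).choose n + (2*n+1).choose (n+1) := by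
    have := Nat.choose_succ_succ (2*n+1) n
    simpa [show (2*n+1)+1 = 2*n+2 from by omega] using this
  have hp3 : (2*n+3).choose (n+1) = (2*n+2).choose n + (2*n+2).choose (n+1) := by
    have := Nat.choose_succ_succ (2*n+2) n
    simpa [show (2*n+2)+1 = 2*n+3 from by omega] using this
  have hr := Nat.choose_succ_right_eq (2*n+3) n
  rw [show 2*n+3-n = n+3 from by omega] at hr
  -- hr : (2*n+3).choose (n+1) * (n+1) = (2*n+3).choose n * (n+3)
  have b1 := bin1 n
  calc ((2*n+3).choose n) * ((n+2)*(n+3))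
      = ((2*n+3).choose n * (n+3)) * (n+2) := by ring
    _ = ((2*n+3).choose (n+1) * (n+1)) * (n+2) := by rw [hr]
    _ = ((2*n+2).choose n * (n+2)) * (n+1) + ((2*n+2).choose (n+1)) * (n+1) * (n+2) := by
        rw [hp3]; ring
    _ = 2*(n+1)*((2*n+1).choose n) * (n+1) + (2*((2*n+1).choose n)) * (n+1) * (n+2) := by
        rw [b1, hp2, hsym]; ring_nf
    _ = 2*(n+1)*(2*n+3)*((2*n+1).choose n) := by ring
lemma bin3 (n : ℕ) (hn : 2 ≤ n) :
    ((2*n+1).choose (n-2)) * ((n+2)*(n+3)) = n*(n-1)*((2*n+1).choose n) := by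
  have h1 := Nat.choose_succ_right_eq (2*n+1) (n-1)
  rw [show (n-1)+1 = n from by omega, show 2*n+1-(n-1) = n+2 from by omega] at h1
  -- h1 : (2*n+1).choose n * n = (2*n+1).choose (n-1) * (n+2)
  have h2 := Nat.choose_succ_right_eq (2*n+1) (n-2)
  rw [show (n-2)+1 = n-1 from by omega, show 2*n+1-(n-2) = n+3 from by omega] at h2
  -- h2 : (2*n+1).choose (n-1) * (n-1) = (2*n+1).choose (n-2) * (n+3)
  calc ((2*n+1).choose (n-2)) * ((n+2)*(n+3))
      = ((2*n+1).choose (n-2) * (n+3)) * (n+2) := by ring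
    _ = ((2*n+1).choose (n-1) * (n-1)) * (n+2) := by rw [h2]
    _ = ((2*n+1).choose (n-1) * (n+2)) * (n-1) := by ring
    _ = ((2*n+1).choose n * n) * (n-1) := by rw [h1]
    _ = n*(n-1)*((2*n+1).choose n) := by ring

set_option maxHeartbeats 4000000 in
theorem stmt19 (n : ℕ) (hn : 2 ≤ n) :
    ∑ k ∈ Finset.range (n+1), (((2*n-k).choose n : ℕ) : ℝ) * (k:ℝ)^2 * H2 k
      = ((3*(n:ℝ)+1)/(2*((n:ℝ)-1))) * (((2*n+1).choose (n-2) : ℕ) : ℝ) *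
        (H2 (2*n+1)
          - (H (2*n+1) - H n) *
            (H (2*n+1) - H n - 2*((n:ℝ)+1)*(2*(n:ℝ)-1)/((n:ℝ)*(3*(n:ℝ)+1)))
          + 2*((n:ℝ)^2-(n:ℝ)+1)/((n:ℝ)*(3*(n:ℝ)+1))) := by
  -- step 1 : decompose k^2 * C
  have step1 : ∑ k ∈ Finset.range (n+1), (((2*n-k).choose n : ℕ) : ℝ) * (k:ℝ)^2 * H2 k
      = (2*(n:ℝ)+1)^2 * (∑ k ∈ range (n+1), (((2*n-k).choose n : ℕ) : ℝ) * H2 k)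
        - (4*(n:ℝ)+3)*((n:ℝ)+1) * (∑ k ∈ range (n+1), (((2*n+1-k).choose (n+1) : ℕ) : ℝ) * H2 k)
        + ((n:ℝ)+1)*((n:ℝ)+2) * (∑ k ∈ range (n+1), (((2*n+2-k).choose (n+2) : ℕ) : ℝ) * H2 k) := by
    have e : ∀ k ∈ range (n+1), (((2*n-k).choose n : ℕ) : ℝ) * (k:ℝ)^2 * H2 k
        = (2*(n:ℝ)+1)^2 * ((((2*n-k).choose n : ℕ) : ℝ) * H2 k)
          - (4*(n:ℝ)+3)*((n:ℝ)+1) * ((((2*n+1-k).choose (n+1) : ℕ) : ℝ) * H2 k)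
          + ((n:ℝ)+1)*((n:ℝ)+2) * ((((2*n+2-k).choose (n+2) : ℕ) : ℝ) * H2 k) := by
      intro k hk
      simp only [Finset.mem_range] at hk
      have hk' : k ≤ n := by omega
      linear_combination (H2 k) * (termdec n k hk')
    rw [Finset.sum_congr rfl e, Finset.sum_add_distrib, Finset.sum_sub_distrib,
      ← Finset.mul_sum, ← Finset.mul_sum, ← Finset.mul_sum]
  -- step 2 : identify the three sums
  have hs0 : (∑ k ∈ range (n+1), (((2*n-k).choose n : ℕ) : ℝ) * H2 k) = Qs (n+1) n := by
    have := Srlem n 0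
    simpa using this
  have hs1 : (∑ k ∈ range (n+1), (((2*n+1-k).choose (n+1) : ℕ) : ℝ) * H2 k) = Qs (n+2) n := by
    have := Srlem n 1
    simpa [show n+1+1 = n+2 from rfl] using this
  have hs2 : (∑ k ∈ range (n+1), (((2*n+2-k).choose (n+2) : ℕ) : ℝ) * H2 k) = Qs (n+3) n := by
    have := Srlem n 2
    simpa [show n+2+1 = n+3 from rfl] using this
  have hq0 : Qs (n+1) n = (((2*n+1).choose n : ℕ):ℝ) *
      ((H2 (2*n+1) - H2 (n+1) - (H (2*n+1) - H (n+1))^2)/2 + Wo (n+1) n) := by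
    have := Qgen n (n+1)
    simpa [show (n+1)+n = 2*n+1 from by omega] using this
  have hq1 : Qs (n+2) n = (((2*n+2).choose n : ℕ):ℝ) *
      ((H2 (2*n+2) - H2 (n+2) - (H (2*n+2) - H (n+2))^2)/2 + Wo (n+2) n) := by
    have := Qgen n (n+2)
    simpa [show (n+2)+n = 2*n+2 from by omega] using this
  have hq2 : Qs (n+3) n = (((2*n+3).choose n : ℕ):ℝ) *
      ((H2 (2*n+3) - H2 (n+3) - (H (2*n+3) - H (n+3))^2)/2 + Wo (n+3) n) := by
    have := Qgen n (n+3)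
    simpa [show (n+3)+n = 2*n+3 from by omega] using this
  -- step 3 : Wo values
  have w1 : Wo (n+1) n = H2 n / 2 - (H (2*n+1) - H (n+1))/((n:ℝ)+1) := by
    have h := Wshift1 n n
    rw [show n+1+n = 2*n+1 from by omega, Wdiag] at h
    linarith
  have w2 : Wo (n+2) n = Wo (n+1) n - (H (2*n+2) - H (n+2))/((n:ℝ)+2) := by
    have h := Wshift1 (n+1) n
    rw [show n+1+1+n = 2*n+2 from by omega] at h
    push_cast at h
    rw [show (n:ℝ)+1+1 = (n:ℝ)+2 from by ring] at h
    linarith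
  have w3 : Wo (n+3) n = Wo (n+2) n - (H (2*n+3) - H (n+3))/((n:ℝ)+3) := by
    have h := Wshift1 (n+2) n
    rw [show n+2+1+n = 2*n+3 from by omega] at h
    push_cast at h
    rw [show (n:ℝ)+2+1 = (n:ℝ)+3 from by ring] at h
    linarith
  -- step 4 : H/H2 shifts
  have hH1 : H (n+1) = H n + 1/((n:ℝ)+1) := Hsucc n
  have hH2 : H (n+2) = H (n+1) + 1/((n:ℝ)+2) := by
    have := Hsucc (n+1); push_cast at this
    rw [show (n:ℝ)+1+1 = (n:ℝ)+2 from by ring] at this; exact this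
  have hH3 : H (n+3) = H (n+2) + 1/((n:ℝ)+3) := by
    have := Hsucc (n+2); push_cast at this
    rw [show (n:ℝ)+2+1 = (n:ℝ)+3 from by ring] at this; exact this
  have hM2 : H (2*n+2) = H (2*n+1) + 1/(2*(n:ℝ)+2) := by
    have := Hsucc (2*n+1); push_cast at this
    rw [show 2*(n:ℝ)+1+1 = 2*(n:ℝ)+2 from by ring] at this; exact this
  have hM3 : H (2*n+3) = H (2*n+2) + 1/(2*(n:ℝ)+3) := by
    have := Hsucc (2*n+2); push_cast at this
    rw [show 2*(n:ℝ)+2+1 = 2*(n:ℝ)+3 from by ring] at this; exact this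
  have gH1 : H2 (n+1) = H2 n + 1/((n:ℝ)+1)^2 := H2succ n
  have gH2 : H2 (n+2) = H2 (n+1) + 1/((n:ℝ)+2)^2 := by
    have := H2succ (n+1); push_cast at this
    rw [show (n:ℝ)+1+1 = (n:ℝ)+2 from by ring] at this; exact this
  have gH3 : H2 (n+3) = H2 (n+2) + 1/((n:ℝ)+3)^2 := by
    have := H2succ (n+2); push_cast at this
    rw [show (n:ℝ)+2+1 = (n:ℝ)+3 from by ring] at this; exact this
  have gM2 : H2 (2*n+2) = H2 (2*n+1) + 1/(2*(n:ℝ)+2)^2 := by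
    have := H2succ (2*n+1); push_cast at this
    rw [show 2*(n:ℝ)+1+1 = 2*(n:ℝ)+2 from by ring] at this; exact this
  have gM3 : H2 (2*n+3) = H2 (2*n+2) + 1/(2*(n:ℝ)+3)^2 := by
    have := H2succ (2*n+2); push_cast at this
    rw [show 2*(n:ℝ)+2+1 = 2*(n:ℝ)+3 from by ring] at this; exact this
  -- step 5 : binomial casts
  have hNpos : (2:ℝ) ≤ (n:ℝ) := by exact_mod_cast hn
  have d1 : ((n:ℝ)+1) ≠ 0 := by positivity
  have d2 : ((n:ℝ)+2) ≠ 0 := by positivity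
  have d3 : ((n:ℝ)+3) ≠ 0 := by positivity
  have d4 : (2*(n:ℝ)+2) ≠ 0 := by positivity
  have d5 : (2*(n:ℝ)+3) ≠ 0 := by positivity
  have d6 : ((n:ℝ)-1) ≠ 0 := by nlinarith
  have d7 : ((n:ℝ)) ≠ 0 := by nlinarith
  have d8 : (3*(n:ℝ)+1) ≠ 0 := by positivity
  have c1 : (((2*n+2).choose n : ℕ) : ℝ)
      = 2*((n:ℝ)+1)*(((2*n+1).choose n : ℕ) : ℝ)/((n:ℝ)+2) := by
    have := congrArg (Nat.cast (R:=ℝ)) (bin1 n)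
    push_cast at this
    field_simp
    linarith [this]
  have c2 : (((2*n+3).choose n : ℕ) : ℝ)
      = 2*((n:ℝ)+1)*(2*(n:ℝ)+3)*(((2*n+1).choose n : ℕ) : ℝ)/(((n:ℝ)+2)*((n:ℝ)+3)) := by
    have := congrArg (Nat.cast (R:=ℝ)) (bin2 n)
    push_cast at this
    field_simp
    linarith [this]
  have c3 : (((2*n+1).choose (n-2) : ℕ) : ℝ)
      = (n:ℝ)*((n:ℝ)-1)*(((2*n+1).choose n : ℕ) : ℝ)/(((n:ℝ)+2)*((n:ℝ)+3)) := by
    have := congrArg (Nat.cast (R:=ℝ)) (bin3 n hn)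
    push_cast [Nat.cast_sub (by omega : 1 ≤ n)] at this
    field_simp
    linarith [this]
  -- assemble
  rw [step1, hs0, hs1, hs2, hq0, hq1, hq2, w3, w2, w1, c1, c2, c3,
    hM3, hM2, hH3, hH2, hH1, gM3, gM2, gH3, gH2, gH1]
  field_simp
  ring
end
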